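/- Let x ∈ ℤ_{≥0}^k be the canonical vector of an ordered partition [k_0, k_1, ..., k_r] of k (value i occurring exactly k_i times, weakly increasing). Then the cardinality of A(x) = {(i,j,+) : i < j, x_i + x_j > 0} ∪ {(i,j,−) : i < j, x_j − x_i > 0} equals 2·C(k,2) − C(k_0,2) − Σ_{i=0}^{r} C(k_i,2), where C(a,2) = a(a−1)/2. -/

import Mathlib

/-- An ordered partition `[k₀, k₁, ..., k_r]` of `k`. -/
def IsOrderedPartition (k : ℕ) (p : List ℕ) : Prop :=
  p ≠ [] ∧ (∀ a ∈ p.tail, 0 < a) ∧ p.sum = k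

/-- The canonical weakly increasing vector of an ordered partition. -/
def canonVec (p : List ℕ) (j : ℕ) : ℕ :=
  ((Finset.range p.length).filter fun i => (p.take (i + 1)).sum ≤ j).card

/-- `A(x)`: `(i,j,+)` records `x_i + x_j > 0` and `(i,j,−)` records `x_j − x_i > 0`. -/
def Aset (k : ℕ) (x : Fin k → ℕ) : Set (Fin k × Fin k × Bool) :=
  {t | t.1 < t.2.1 ∧ (if t.2.2 then 0 < x t.1 + x t.2.1 else x t.1 < x t.2.1)}

open Finset

lemma take_sum_mono (p : List ℕ) {a b : ℕ} (h : a ≤ b) :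
    (p.take a).sum ≤ (p.take b).sum := by
  have h1 : (p.take b).take a = p.take a := by rw [List.take_take, min_eq_left h]
  calc (p.take a).sum = ((p.take b).take a).sum := by rw [h1]
    _ ≤ (p.take b).sum := by
        conv_rhs => rw [← List.take_append_drop a (p.take b)]
        rw [List.sum_append]
        exact Nat.le_add_right _ _

lemma le_canonVec (p : List ℕ) (m j : ℕ) :
    m ≤ canonVec p j ↔ m ≤ p.length ∧ (p.take m).sum ≤ j := by
  set F := (Finset.range p.length).filter fun i => (p.take (i + 1)).sum ≤ j with hF
  have hcF : canonVec p j = F.card := rfl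
  rw [hcF]
  constructor
  · intro h
    have hm : m ≤ p.length := by
      calc m ≤ F.card := h
        _ ≤ (Finset.range p.length).card := Finset.card_filter_le _ _
        _ = p.length := Finset.card_range _
    refine ⟨hm, ?_⟩
    match m, h with
    | 0, _ => simp
    | (m' + 1), h =>
      by_contra hj
      push_neg at hj
      have hss : F ⊆ Finset.range m' := by
        intro i hi
        rw [hF, Finset.mem_filter, Finset.mem_range] at hi
        rw [Finset.mem_range]
        by_contra hge
        push_neg at hge
        have : (p.take (m' + 1)).sum ≤ (p.take (i + 1)).sum :=
          take_sum_mono p (by omega)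
        omega
      have := Finset.card_le_card hss
      rw [Finset.card_range] at this
      omega
  · rintro ⟨hm, hj⟩
    have hss : Finset.range m ⊆ F := by
      intro i hi
      rw [Finset.mem_range] at hi
      rw [hF, Finset.mem_filter, Finset.mem_range]
      refine ⟨by omega, ?_⟩
      calc (p.take (i + 1)).sum ≤ (p.take m).sum := take_sum_mono p (by omega)
        _ ≤ j := hj
    have := Finset.card_le_card hss
    rw [Finset.card_range] at this
    exact this

/-- For the canonical vector `x` of an ordered partition `[k₀, ..., k_r]` of `k`,
`|A(x)| = 2·C(k,2) − C(k₀,2) − Σ_{i=0}^r C(k_i,2)`. -/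
theorem stmt_4 (k : ℕ) (p : List ℕ) (hp : IsOrderedPartition k p) :
    (Aset k (fun j : Fin k => canonVec p j)).ncard =
      2 * Nat.choose k 2 - Nat.choose p.headI 2 - (p.map fun a => Nat.choose a 2).sum := by
  obtain ⟨hpne, -, hpsum⟩ := hp
  set x : ℕ → ℕ := canonVec p with hx
  have hS : ∀ m, (p.take m).sum = (p.take m).sum := fun _ => rfl
  have hn1 : 1 ≤ p.length := List.length_pos_iff.mpr hpne
  have hxle : ∀ j, x j ≤ p.length := fun j => ((le_canonVec p (x j) j).mp le_rfl).1
  have hSx : ∀ j, (p.take (x j)).sum ≤ j := fun j => ((le_canonVec p (x j) j).mp le_rfl).2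
  have hmono : ∀ i j, i ≤ j → x i ≤ x j := by
    intro i j hij
    exact (le_canonVec p (x i) j).mpr ⟨hxle i, le_trans (hSx i) hij⟩
  have hlt : ∀ i j, x i < x j ↔ i < (p.take (x j)).sum := by
    intro i j
    rw [← Nat.not_le, ← Nat.not_le]
    constructor
    · intro h h'
      exact h ((le_canonVec p (x j) i).mpr ⟨hxle j, h'⟩)
    · intro h h'
      exact h ((le_canonVec p (x j) i).mp h').2
  have hS1 : (p.take 1).sum = p.headI := by
    cases p with
    | nil => exact absurd rfl hpne
    | cons a q => simp
  have hpos : ∀ j, 0 < x j ↔ p.headI ≤ j := by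
    intro j
    rw [← hS1]
    constructor
    · intro h
      exact ((le_canonVec p 1 j).mp h).2
    · intro h
      exact (le_canonVec p 1 j).mpr ⟨hn1, h⟩
  have hSk : (p.take p.length).sum = k := by rw [List.take_length, hpsum]
  have hk0 : p.headI ≤ k := by
    rw [← hS1, ← hSk]; exact take_sum_mono p hn1
  -- fiber characterization
  have hfiber : ∀ N j, N < p.length → (p.take N).sum ≤ j → j < (p.take (N + 1)).sum →
      x j = N := by
    intro N j hNn hNj hjN
    have h1 : N ≤ x j := (le_canonVec p N j).mpr ⟨by omega, hNj⟩
    have h2 : ¬ (N + 1 ≤ x j) := by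
      intro h
      have := ((le_canonVec p (N + 1) j).mp h).2
      omega
    omega
  -- the set as a Finset
  have hAF : Aset k (fun j : Fin k => x j.val) =
      ↑(Finset.univ.filter fun t : Fin k × Fin k × Bool =>
        t.1 < t.2.1 ∧ (if t.2.2 then 0 < x t.1.val + x t.2.1.val
          else x t.1.val < x t.2.1.val)) := by
    ext t
    simp [Aset]
  rw [hAF, Set.ncard_coe_finset, Finset.card_filter]
  have hmid : (∑ t : Fin k × Fin k × Bool,
      if t.1 < t.2.1 ∧ (if t.2.2 then 0 < x t.1.val + x t.2.1.val
          else x t.1.val < x t.2.1.val) then 1 else 0) =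
      ∑ j ∈ range k, ∑ i ∈ range k,
        ((if i < j ∧ 0 < x i + x j then 1 else 0) +
          (if i < j ∧ x i < x j then 1 else 0)) := by
    rw [Fintype.sum_prod_type]
    have h1 : ∀ i : Fin k, (∑ y : Fin k × Bool,
        if i < y.1 ∧ (if y.2 then 0 < x i.val + x y.1.val
          else x i.val < x y.1.val) then 1 else 0) =
        ∑ j : Fin k, ((if i.val < j.val ∧ 0 < x i.val + x j.val then 1 else 0) +
          (if i.val < j.val ∧ x i.val < x j.val then 1 else 0)) := by
      intro i
      rw [Fintype.sum_prod_type]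
      refine Finset.sum_congr rfl fun j _ => ?_
      rw [Fintype.sum_bool]
      simp only [if_true, Bool.false_eq_true, if_false, Fin.lt_def]
    simp only [h1]
    rw [Finset.sum_comm]
    rw [← Fin.sum_univ_eq_sum_range (fun j => ∑ i ∈ range k,
      ((if i < j ∧ 0 < x i + x j then 1 else 0) +
        (if i < j ∧ x i < x j then 1 else 0)))]
    refine Finset.sum_congr rfl fun j _ => ?_
    rw [← Fin.sum_univ_eq_sum_range (fun i =>
      ((if i < j.val ∧ 0 < x i + x j.val then 1 else 0) +
        (if i < j.val ∧ x i < x j.val then 1 else 0)))]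
  rw [hmid]
  -- per-j inner sums
  have hplus : ∀ j, j < k → (∑ i ∈ range k,
      if i < j ∧ 0 < x i + x j then 1 else 0) = if 0 < x j then j else 0 := by
    intro j hj
    rw [← Finset.card_filter]
    by_cases h0 : 0 < x j
    · have he : (range k).filter (fun i => i < j ∧ 0 < x i + x j) = range j := by
        ext i
        simp only [Finset.mem_filter, Finset.mem_range]
        constructor
        · rintro ⟨-, h, -⟩; exact h
        · intro h; exact ⟨by omega, h, by omega⟩
      rw [he, Finset.card_range, if_pos h0]
    · have he : (range k).filter (fun i => i < j ∧ 0 < x i + x j) = ∅ := by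
        ext i
        simp only [Finset.mem_filter, Finset.mem_range, Finset.notMem_empty, iff_false,
          not_and]
        intro hik hij
        have := hmono i j (by omega)
        omega
      rw [he, Finset.card_empty, if_neg h0]
  have hminus : ∀ j, j < k → (∑ i ∈ range k,
      if i < j ∧ x i < x j then 1 else 0) = (p.take (x j)).sum := by
    intro j hj
    rw [← Finset.card_filter]
    have he : (range k).filter (fun i => i < j ∧ x i < x j) = range ((p.take (x j)).sum) := by
      ext i
      simp only [Finset.mem_filter, Finset.mem_range]
      constructor
      · rintro ⟨-, -, h⟩; exact (hlt i j).mp h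
      · intro h
        have h1 := hSx j
        exact ⟨by omega, by omega, (hlt i j).mpr h⟩
    rw [he, Finset.card_range]
  have hsum : (∑ j ∈ range k, ∑ i ∈ range k,
      ((if i < j ∧ 0 < x i + x j then 1 else 0) +
        (if i < j ∧ x i < x j then 1 else 0))) =
      (∑ j ∈ range k, if 0 < x j then j else 0) +
        ∑ j ∈ range k, (p.take (x j)).sum := by
    rw [← Finset.sum_add_distrib]
    refine Finset.sum_congr rfl fun j hj => ?_
    rw [Finset.mem_range] at hj
    rw [Finset.sum_add_distrib, hplus j hj, hminus j hj]
  rw [hsum]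
  -- Gauss sums
  have hgauss : ∀ m : ℕ, ∑ j ∈ range m, j = m.choose 2 := by
    intro m
    rw [Finset.sum_range_id, Nat.choose_two_right]
  -- part A
  have hA : (∑ j ∈ range k, if 0 < x j then j else 0) + (p.headI).choose 2 =
      k.choose 2 := by
    have h1 : ∀ j, (if 0 < x j then j else 0) = if p.headI ≤ j then j else 0 := by
      intro j
      by_cases h : p.headI ≤ j
      · rw [if_pos ((hpos j).mpr h), if_pos h]
      · rw [if_neg (fun h' => h ((hpos j).mp h')), if_neg h]
    simp only [h1]
    rw [← hgauss k, ← hgauss p.headI, Finset.range_eq_Ico,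
      ← Finset.sum_Ico_consecutive (fun j => if p.headI ≤ j then j else 0)
        (Nat.zero_le p.headI) hk0]
    have h2 : ∑ j ∈ Finset.Ico 0 p.headI, (if p.headI ≤ j then j else 0) = 0 := by
      apply Finset.sum_eq_zero
      intro j hj
      rw [Finset.mem_Ico] at hj
      rw [if_neg (by omega)]
    have h3 : ∑ j ∈ Finset.Ico p.headI k, (if p.headI ≤ j then j else 0) =
        ∑ j ∈ Finset.Ico p.headI k, j := by
      refine Finset.sum_congr rfl fun j hj => ?_
      rw [Finset.mem_Ico] at hj
      rw [if_pos hj.1]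
    rw [h2, h3, zero_add, Finset.range_eq_Ico, add_comm,
      Finset.sum_Ico_consecutive _ (Nat.zero_le p.headI) hk0]
  -- part B
  have hB : ∀ N, N ≤ p.length → (∑ j ∈ range ((p.take N).sum), (j - (p.take (x j)).sum)) =
      ((p.map fun a => Nat.choose a 2).take N).sum := by
    intro N
    induction N with
    | zero => simp
    | succ N ih =>
      intro hNn
      have hIH := ih (by omega)
      have hmono' : (p.take N).sum ≤ (p.take (N + 1)).sum := take_sum_mono p (by omega)
      have hNlen : N < p.length := by omega
      have hgetS : (p.take (N + 1)).sum = (p.take N).sum + p[N] := List.sum_take_succ p N hNlen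
      rw [Finset.range_eq_Ico,
        ← Finset.sum_Ico_consecutive _ (Nat.zero_le ((p.take N).sum)) hmono',
        ← Finset.range_eq_Ico, hIH]
      have hIco : (∑ j ∈ Finset.Ico ((p.take N).sum) ((p.take (N + 1)).sum),
          (j - (p.take (x j)).sum)) = (p[N]).choose 2 := by
        have h1 : ∀ j ∈ Finset.Ico ((p.take N).sum) ((p.take (N + 1)).sum),
            (j - (p.take (x j)).sum) = j - (p.take N).sum := by
          intro j hj
          rw [Finset.mem_Ico] at hj
          rw [hfiber N j (by omega) hj.1 hj.2]
        rw [Finset.sum_congr rfl h1, Finset.sum_Ico_eq_sum_range]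
        have h2 : ∀ t, (p.take N).sum + t - (p.take N).sum = t := fun t => by omega
        simp only [h2]
        rw [hgauss]
        congr 1
        omega
      rw [hIco]
      have hmaplen : N < (p.map fun a => Nat.choose a 2).length := by
        rw [List.length_map]; omega
      rw [List.sum_take_succ _ N hmaplen]
      congr 1
      simp
  have hBk : (∑ j ∈ range k, (p.take (x j)).sum) + (p.map fun a => Nat.choose a 2).sum =
      k.choose 2 := by
    have h1 : (∑ j ∈ range k, (j - (p.take (x j)).sum)) =
        (p.map fun a => Nat.choose a 2).sum := by
      have h0 := hB p.length le_rfl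
      rw [hSk] at h0
      rw [h0, List.take_of_length_le (by rw [List.length_map])]
    have h2 : ∑ j ∈ range k, j =
        (∑ j ∈ range k, (p.take (x j)).sum) + ∑ j ∈ range k, (j - (p.take (x j)).sum) := by
      rw [← Finset.sum_add_distrib]
      refine Finset.sum_congr rfl fun j _ => ?_
      have := hSx j
      omega
    rw [← h1, ← h2, hgauss]
  -- finish
  have hc0 : (p.headI).choose 2 ≤ k.choose 2 := Nat.choose_le_choose 2 hk0
  omega
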